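/- Let L be the Laplacian matrix of a connected graph G on n vertices and L̂ a real symmetric matrix with all row sums and column sums zero. Then (I - L L†) L̂ (I - L† L) = 0; consequently, the Moore-Penrose inverse of the dual matrix L_w = L + L̂ ε exists. -/

import Mathlib

set_option linter.unnecessarySeqFocus false

open Matrix TrivSqZeroExt

/-- The dual matrix `A_s + A_d ε` built from its standard and infinitesimal parts. -/
def dm {m n : Type*} (A B : Matrix m n ℝ) : Matrix m n (DualNumber ℝ) :=
  Matrix.of fun i j => TrivSqZeroExt.inl (A i j) + TrivSqZeroExt.inr (B i j)

lemma dm_mul {n : Type*} [Fintype n] (A B C D : Matrix n n ℝ) :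
    dm A B * dm C D = dm (A * C) (A * D + B * C) := by
  ext i j <;>
  simp only [dm, Matrix.mul_apply, Matrix.of_apply, Matrix.add_apply, add_mul, mul_add,
    inl_mul_inl, inl_mul_inr, inr_mul_inl, inr_mul_inr, smul_eq_mul, op_smul_eq_mul,
    add_zero, Finset.sum_add_distrib, ← inl_sum, ← inr_sum,
    fst_add, snd_add, fst_inl, snd_inl, fst_inr, snd_inr] <;>
  ring

lemma dm_congr {m n : Type*} {A B C D : Matrix m n ℝ} (h1 : A = C) (h2 : B = D) :
    dm A B = dm C D := by rw [h1, h2]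

lemma dm_transpose {m n : Type*} (A B : Matrix m n ℝ) : (dm A B)ᵀ = dm Aᵀ Bᵀ := rfl

lemma col_const' {n : ℕ} (G : SimpleGraph (Fin n)) [DecidableRel G.Adj] (hG : G.Connected)
    (K : Matrix (Fin n) (Fin n) ℝ) (h : G.lapMatrix ℝ * K = 0) :
    ∀ i i' j, K i j = K i' j := by
  intro i i' j
  have hx : Matrix.toLin' (G.lapMatrix ℝ) (fun k => K k j) = 0 := by
    rw [Matrix.toLin'_apply]
    funext i2
    have h2 : (G.lapMatrix ℝ * K) i2 j = 0 := by rw [h]; simp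
    simpa [Matrix.mul_apply, Matrix.mulVec, dotProduct] using h2
  exact (G.lapMatrix_mulVec_eq_zero_iff_forall_reachable.mp (by rwa [Matrix.toLin'_apply] at hx)) i i' (hG.preconnected i i')

/-- For the Laplacian `L` of a connected graph with Moore-Penrose inverse `L†` and a
symmetric perturbation `L̂` with zero row and column sums, one has
`(I - L L†) L̂ (I - L† L) = 0`; consequently the Moore-Penrose inverse of the
dual matrix `L_w = L + L̂ ε` exists. -/
theorem dual_laplacian_mp_exists {n : ℕ} (hn : 0 < n)
    (G : SimpleGraph (Fin n)) [DecidableRel G.Adj] (hG : G.Connected)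
    (Lhat : Matrix (Fin n) (Fin n) ℝ) (hsym : Lhatᵀ = Lhat)
    (hrow : Lhat *ᵥ (fun _ => (1 : ℝ)) = 0)
    (hcol : (fun _ => (1 : ℝ)) ᵥ* Lhat = 0)
    (Ld : Matrix (Fin n) (Fin n) ℝ)
    (h1 : G.lapMatrix ℝ * Ld * G.lapMatrix ℝ = G.lapMatrix ℝ)
    (h2 : Ld * G.lapMatrix ℝ * Ld = Ld)
    (h3 : (G.lapMatrix ℝ * Ld)ᵀ = G.lapMatrix ℝ * Ld)
    (h4 : (Ld * G.lapMatrix ℝ)ᵀ = Ld * G.lapMatrix ℝ) :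
    (1 - G.lapMatrix ℝ * Ld) * Lhat * (1 - Ld * G.lapMatrix ℝ) = 0 ∧
      ∃ X : Matrix (Fin n) (Fin n) (DualNumber ℝ),
        dm (G.lapMatrix ℝ) Lhat * X * dm (G.lapMatrix ℝ) Lhat = dm (G.lapMatrix ℝ) Lhat ∧
        X * dm (G.lapMatrix ℝ) Lhat * X = X ∧
        (dm (G.lapMatrix ℝ) Lhat * X)ᵀ = dm (G.lapMatrix ℝ) Lhat * X ∧
        (X * dm (G.lapMatrix ℝ) Lhat)ᵀ = X * dm (G.lapMatrix ℝ) Lhat := by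
  set L := G.lapMatrix ℝ with hL
  have hLsym : Lᵀ = L := G.isSymm_lapMatrix ℝ
  set M : Matrix (Fin n) (Fin n) ℝ := 1 - L * Ld with hM
  set N : Matrix (Fin n) (Fin n) ℝ := 1 - Ld * L with hN
  have hMsym : Mᵀ = M := by rw [hM, transpose_sub, transpose_one, h3]
  have hNsym : Nᵀ = N := by rw [hN, transpose_sub, transpose_one, h4]
  have hML : M * L = 0 := by rw [hM]; rw [sub_mul, one_mul, h1, sub_self]
  have hLM : L * M = 0 := by
    have := congrArg Matrix.transpose hML
    rwa [transpose_mul, hLsym, hMsym, transpose_zero] at this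
  have hLN : L * N = 0 := by rw [hN]; rw [mul_sub, mul_one, ← Matrix.mul_assoc, h1, sub_self]
  have i0 : Fin n := ⟨0, hn⟩
  -- M and N are constant matrices
  have hMc : ∀ i j, M i j = M i0 i0 := by
    intro i j
    have c := col_const' G hG M hLM
    have hsymM : ∀ a b, M a b = M b a := fun a b => by
      exact congrFun (congrFun hMsym b) a
    calc M i j = M i0 j := c i i0 j
      _ = M j i0 := hsymM i0 j
      _ = M i0 i0 := c j i0 i0
  have hNc : ∀ i j, N i j = N i0 i0 := by
    intro i j
    have c := col_const' G hG N hLN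
    have hsymN : ∀ a b, N a b = N b a := fun a b => by
      exact congrFun (congrFun hNsym b) a
    calc N i j = N i0 j := c i i0 j
      _ = N j i0 := hsymN i0 j
      _ = N i0 i0 := c j i0 i0
  have hMLhat : M * Lhat = 0 := by
    ext i j
    have hc : ∑ k, Lhat k j = 0 := by
      have := congrFun hcol j
      simpa [Matrix.vecMul, dotProduct] using this
    simp only [Matrix.mul_apply, Matrix.zero_apply]
    calc ∑ k, M i k * Lhat k j = ∑ k, M i0 i0 * Lhat k j := by
          exact Finset.sum_congr rfl fun k _ => by rw [hMc i k]
      _ = M i0 i0 * ∑ k, Lhat k j := by rw [Finset.mul_sum]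
      _ = 0 := by rw [hc, mul_zero]
  have hLhatN : Lhat * N = 0 := by
    ext i j
    have hr : ∑ k, Lhat i k = 0 := by
      have := congrFun hrow i
      simpa [Matrix.mulVec, dotProduct] using this
    simp only [Matrix.mul_apply, Matrix.zero_apply]
    calc ∑ k, Lhat i k * N k j = ∑ k, Lhat i k * N i0 i0 := by
          exact Finset.sum_congr rfl fun k _ => by rw [hNc k j]
      _ = (∑ k, Lhat i k) * N i0 i0 := by rw [Finset.sum_mul]
      _ = 0 := by rw [hr, zero_mul]
  -- key identities
  have e1 : L * Ld * Lhat = Lhat := by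
    have : (1 - L * Ld) * Lhat = 0 := hMLhat
    rw [sub_mul, one_mul, sub_eq_zero] at this
    exact this.symm
  have e2 : Lhat * (Ld * L) = Lhat := by
    have : Lhat * (1 - Ld * L) = 0 := hLhatN
    rw [mul_sub, mul_one, sub_eq_zero] at this
    exact this.symm
  refine ⟨by rw [Matrix.mul_assoc, hLhatN, Matrix.mul_zero], ?_⟩
  set E : Matrix (Fin n) (Fin n) ℝ := -(Ld * Lhat * Ld) with hE
  refine ⟨dm Ld E, ?_, ?_, ?_, ?_⟩
  · rw [dm_mul, dm_mul]
    refine dm_congr h1 ?_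
    · rw [hE]
      have t1 : L * -(Ld * Lhat * Ld) * L = -Lhat := by
        calc L * -(Ld * Lhat * Ld) * L = -((L * Ld * Lhat) * (Ld * L)) := by
              rw [mul_neg, neg_mul]; congr 1; noncomm_ring
          _ = -(Lhat * (Ld * L)) := by rw [e1]
          _ = -Lhat := by rw [e2]
      calc L * Ld * Lhat + (L * -(Ld * Lhat * Ld) + Lhat * Ld) * L
          = Lhat + (L * -(Ld * Lhat * Ld) * L + Lhat * (Ld * L)) := by
            rw [e1]; noncomm_ring
        _ = Lhat + (-Lhat + Lhat) := by rw [t1, e2]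
        _ = Lhat := by abel
  · rw [dm_mul, dm_mul]
    refine dm_congr h2 ?_
    · rw [hE]
      have t1 : Ld * L * -(Ld * Lhat * Ld) = -(Ld * Lhat * Ld) := by
        calc Ld * L * -(Ld * Lhat * Ld) = -((Ld * L * Ld) * Lhat * Ld) := by noncomm_ring
          _ = -(Ld * Lhat * Ld) := by rw [h2]
      have t2 : -(Ld * Lhat * Ld) * L * Ld = -(Ld * Lhat * Ld) := by
        calc -(Ld * Lhat * Ld) * L * Ld = -(Ld * Lhat * (Ld * L * Ld)) := by noncomm_ring
          _ = -(Ld * Lhat * Ld) := by rw [h2]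
      calc Ld * L * -(Ld * Lhat * Ld) + (Ld * Lhat + -(Ld * Lhat * Ld) * L) * Ld
          = Ld * L * -(Ld * Lhat * Ld) + Ld * Lhat * Ld + -(Ld * Lhat * Ld) * L * Ld := by
            noncomm_ring
        _ = -(Ld * Lhat * Ld) + Ld * Lhat * Ld + -(Ld * Lhat * Ld) := by rw [t1, t2]
        _ = -(Ld * Lhat * Ld) := by abel
  · rw [dm_mul]
    have hz : L * E + Lhat * Ld = 0 := by
      rw [hE]
      calc L * -(Ld * Lhat * Ld) + Lhat * Ld = -((L * Ld * Lhat) * Ld) + Lhat * Ld := by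
            noncomm_ring
        _ = 0 := by rw [e1]; abel
    rw [hz, dm_transpose]
    exact dm_congr h3 transpose_zero
  · rw [dm_mul]
    have hz : Ld * Lhat + E * L = 0 := by
      rw [hE]
      calc Ld * Lhat + -(Ld * Lhat * Ld) * L = Ld * Lhat + -(Ld * (Lhat * (Ld * L))) := by
            noncomm_ring
        _ = 0 := by rw [e2]; abel
    rw [hz, dm_transpose]
    exact dm_congr h4 transpose_zero
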